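/- Let t = (t_1,...,t_m) be a strictly increasing sequence in [n]. If A = (a^(1),...,a^(m+1)) is an (n,t)-compatible list of increasing parking functions, then Join(A) is an increasing parking completion of t; conversely, if p is an increasing parking completion of t, then Split(p), padded with empty lists to length m+1 if necessary, is (n,t)-compatible. Hence Join restricts to a bijection from (n,t)-compatible lists onto IPC_n(t). -/

import Mathlib

/-- An increasing parking function: a weakly increasing list `a` with
`1 ≤ a i ≤ i` (1-indexed). -/
def IsIPF (a : List ℕ) : Prop :=
  a.Pairwise (· ≤ ·) ∧ ∀ i (h : i < a.length), 1 ≤ a.get ⟨i, h⟩ ∧ a.get ⟨i, h⟩ ≤ i + 1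

/-- `Join`: concatenate a list of (increasing) parking functions, shifting the
`i`-th block up by `L (i-1) + i - 1`. -/
def Join : List (List ℕ) → List ℕ
  | [] => []
  | a :: A => a ++ (Join A).map (· + (a.length + 1))

open Classical in
/-- Fuel-driven implementation of `Split`; on weakly increasing lists of
positive integers the fuel `p.sum + 1` used in `Split` always suffices. -/
noncomputable def SplitAux : ℕ → List ℕ → List (List ℕ)
  | 0, _ => []
  | fuel + 1, p =>
    if p = [] then []
    else
      let k := Nat.findGreatest (fun k => IsIPF (p.take k)) p.length
      let q := p.drop k
      if q = [] then [p.take k]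
      else p.take k :: SplitAux fuel (q.map (· - (k + 1)))

/-- `Split`, the inverse of `Join`: repeatedly extract the longest prefix that
is an increasing parking function and shift the remainder down. -/
noncomputable def Split (p : List ℕ) : List (List ℕ) :=
  SplitAux (p.sum + 1) p

lemma isIPF_iff (a : List ℕ) : IsIPF a ↔
    a.Pairwise (· ≤ ·) ∧ ∀ i < a.length, 1 ≤ a.getD i 0 ∧ a.getD i 0 ≤ i + 1 := by
  unfold IsIPF
  refine and_congr_right fun _ => ⟨fun h i hi => ?_, fun h i hi => ?_⟩
  · rw [List.getD_eq_getElem _ _ hi]; exact h i hi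
  · rw [List.get_eq_getElem, ← List.getD_eq_getElem _ 0 hi]; exact h i hi

lemma isIPF_nil : IsIPF [] := by
  rw [isIPF_iff]; exact ⟨List.Pairwise.nil, by simp⟩

lemma IsIPF.take {a : List ℕ} (h : IsIPF a) (k : ℕ) : IsIPF (a.take k) := by
  rw [isIPF_iff] at h ⊢
  refine ⟨h.1.sublist (List.take_sublist _ _), fun i hi => ?_⟩
  rw [List.length_take] at hi
  have hi' : i < a.length := lt_of_lt_of_le hi (min_le_right _ _)
  rw [List.getD_eq_getElem _ _ (by simpa [List.length_take] using hi),
    List.getElem_take]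
  have := h.2 i hi'
  rw [List.getD_eq_getElem _ _ hi'] at this
  exact this

lemma IsIPF.mem_bounds {a : List ℕ} (h : IsIPF a) {x : ℕ} (hx : x ∈ a) :
    1 ≤ x ∧ x ≤ a.length := by
  rw [isIPF_iff] at h
  obtain ⟨i, hi, rfl⟩ := List.getElem_of_mem hx
  rw [← List.getD_eq_getElem _ 0 hi]
  exact ⟨(h.2 i hi).1, le_trans (h.2 i hi).2 hi⟩

lemma join_length (A : List (List ℕ)) : (Join A).length = (A.map List.length).sum := by
  induction A with
  | nil => rfl
  | cons a A ih => simp [Join, ih]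

lemma join_append_replicate (A : List (List ℕ)) (k : ℕ) :
    Join (A ++ List.replicate k []) = Join A := by
  induction A with
  | nil =>
    induction k with
    | zero => rfl
    | succ k ih => simpa [Join, List.replicate_succ] using ih
  | cons a A ih => simp [Join, ih]

lemma join_sorted_pos (A : List (List ℕ)) (h : ∀ a ∈ A, IsIPF a) :
    (Join A).Pairwise (· ≤ ·) ∧ ∀ x ∈ Join A, 1 ≤ x := by
  induction A with
  | nil => simp [Join]
  | cons a A ih =>
    obtain ⟨hs, hpos⟩ := ih (fun b hb => h b (List.mem_cons_of_mem _ hb))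
    have ha : IsIPF a := h a (List.mem_cons_self)
    constructor
    · rw [Join, List.pairwise_append]
      refine ⟨ha.1, List.Pairwise.map _ (fun x y hxy => by omega) hs, fun x hx y hy => ?_⟩
      obtain ⟨z, hz, rfl⟩ := List.mem_map.1 hy
      have := (ha.mem_bounds hx).2
      omega
    · intro x hx
      rw [Join, List.mem_append] at hx
      rcases hx with hx | hx
      · exact (ha.mem_bounds hx).1
      · obtain ⟨z, hz, rfl⟩ := List.mem_map.1 hx
        omega

lemma join_upper (A : List (List ℕ)) (h : ∀ a ∈ A, IsIPF a) :
    ∀ i < (Join A).length, ∃ r < A.length,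
      ((A.take r).map List.length).sum ≤ i ∧ (Join A).getD i 0 ≤ i + r + 1 := by
  induction A with
  | nil => simp [Join]
  | cons a A ih =>
    intro i hi
    have ha : IsIPF a := h a (List.mem_cons_self)
    rw [Join] at hi ⊢
    by_cases hia : i < a.length
    · refine ⟨0, by simp, by simp, ?_⟩
      rw [List.getD_eq_getElem _ _ hi, List.getElem_append_left hia,
        ← List.getD_eq_getElem _ 0 hia]
      exact ((isIPF_iff a).1 ha).2 i hia |>.2
    · push_neg at hia
      rw [List.length_append, List.length_map] at hi
      have hi' : i - a.length < (Join A).length := by omega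
      obtain ⟨r, hr, hLr, hv⟩ := ih (fun b hb => h b (List.mem_cons_of_mem _ hb)) _ hi'
      refine ⟨r + 1, by simpa using hr, ?_, ?_⟩
      · rw [List.take_succ_cons, List.map_cons, List.sum_cons]
        omega
      · rw [List.getD_eq_getElem _ _ (by rw [List.length_append, List.length_map]; omega),
          List.getElem_append_right hia, List.getElem_map]
        rw [List.getD_eq_getElem _ 0 hi'] at hv
        omega

lemma lsum_mono (A : List (List ℕ)) {r₁ r₂ : ℕ} (h : r₁ ≤ r₂) :
    ((A.take r₁).map List.length).sum ≤ ((A.take r₂).map List.length).sum := by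
  have : A.take r₁ = (A.take r₂).take r₁ := by rw [List.take_take, min_eq_left h]
  rw [this]
  exact List.Sublist.sum_le_sum (((A.take r₂).take_sublist r₁).map _) (by simp)

lemma sorted_getD_le {v : List ℕ} (hv : v.Pairwise (· ≤ ·)) {i j : ℕ} (hij : i ≤ j)
    (hj : j < v.length) : v.getD i 0 ≤ v.getD j 0 := by
  rcases eq_or_lt_of_le hij with rfl | h
  · exact le_refl _
  · rw [List.getD_eq_getElem _ _ (lt_trans h hj), List.getD_eq_getElem _ _ hj]
    exact List.pairwise_iff_getElem.1 hv _ _ _ _ h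

lemma sorted_lt_getD_gap {v : List ℕ} (hv : v.Pairwise (· < ·)) {i j : ℕ} (hij : i ≤ j)
    (hj : j < v.length) : v.getD i 0 + (j - i) ≤ v.getD j 0 := by
  induction j with
  | zero => interval_cases i; simp
  | succ j ih =>
    rcases Nat.lt_or_ge i (j + 1) with h | h
    · have h1 : v.getD j 0 < v.getD (j+1) 0 := by
        rw [List.getD_eq_getElem _ _ (by omega), List.getD_eq_getElem _ _ hj]
        exact List.pairwise_iff_getElem.1 hv _ _ _ _ (by omega)
      have := ih (by omega) (by omega)
      omega
    · have : i = j + 1 := by omega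
      subst this; simp

lemma mem_take_getD {v : List ℕ} {k : ℕ} {x : ℕ} (hx : x ∈ v.take k) :
    ∃ j < min k v.length, x = v.getD j 0 := by
  obtain ⟨j, hj, rfl⟩ := List.getElem_of_mem hx
  rw [List.length_take] at hj
  refine ⟨j, hj, ?_⟩
  rw [List.getElem_take, List.getD_eq_getElem _ _ (by omega)]

lemma mem_drop_getD {v : List ℕ} {k : ℕ} {x : ℕ} (hx : x ∈ v.drop k) :
    ∃ j, k + j < v.length ∧ x = v.getD (k + j) 0 := by
  obtain ⟨j, hj, rfl⟩ := List.getElem_of_mem hx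
  rw [List.length_drop] at hj
  refine ⟨j, by omega, ?_⟩
  rw [List.getElem_drop, List.getD_eq_getElem _ _ (by omega)]

lemma sorted_le_count {v : List ℕ} (hv : v.Pairwise (· ≤ ·)) {i : ℕ} (hi : i < v.length)
    (X : ℕ) : v.getD i 0 ≤ X ↔ i + 1 ≤ (v.filter (fun y => decide (y ≤ X))).length := by
  constructor
  · intro h
    have h1 : (v.take (i+1)).filter (fun y => decide (y ≤ X)) = v.take (i+1) := by
      rw [List.filter_eq_self]
      intro x hx
      obtain ⟨j, hj, rfl⟩ := mem_take_getD hx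
      simp only [decide_eq_true_eq]
      exact le_trans (le_trans (sorted_getD_le hv (by omega) hi) h) (le_refl X)
    have h2 : ((v.take (i+1)).filter (fun y => decide (y ≤ X))).length ≤
        (v.filter (fun y => decide (y ≤ X))).length :=
      ((v.take_sublist (i+1)).filter _).length_le
    rw [h1, List.length_take] at h2
    omega
  · intro h
    by_contra hX
    push_neg at hX
    have hsplit : v.filter (fun y => decide (y ≤ X)) =
        (v.take i).filter (fun y => decide (y ≤ X)) ++
        (v.drop i).filter (fun y => decide (y ≤ X)) := by
      rw [← List.filter_append, List.take_append_drop]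
    have hnil : (v.drop i).filter (fun y => decide (y ≤ X)) = [] := by
      rw [List.filter_eq_nil_iff]
      intro x hx
      obtain ⟨j, hj, rfl⟩ := mem_drop_getD hx
      simp only [decide_eq_true_eq, not_le]
      exact lt_of_lt_of_le hX (sorted_getD_le hv (by omega) (by omega))
    have h3 := List.length_filter_le (fun y => decide (y ≤ X)) (v.take i)
    rw [hsplit, List.length_append, hnil] at h
    rw [List.length_take] at h3
    simp at h
    omega

lemma sorted_lt_count_eq {v : List ℕ} (hv : v.Pairwise (· < ·)) {i : ℕ} (hi : i < v.length) :
    (v.filter (fun y => decide (y ≤ v.getD i 0))).length = i + 1 := by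
  have hle : v.Pairwise (· ≤ ·) := hv.imp le_of_lt
  have h1 := (sorted_le_count hle hi (v.getD i 0)).1 (le_refl _)
  have hsplit : v.filter (fun y => decide (y ≤ v.getD i 0)) =
      (v.take (i+1)).filter (fun y => decide (y ≤ v.getD i 0)) ++
      (v.drop (i+1)).filter (fun y => decide (y ≤ v.getD i 0)) := by
    rw [← List.filter_append, List.take_append_drop]
  have hnil : (v.drop (i+1)).filter (fun y => decide (y ≤ v.getD i 0)) = [] := by
    rw [List.filter_eq_nil_iff]
    intro x hx
    obtain ⟨j, hj, rfl⟩ := mem_drop_getD hx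
    simp only [decide_eq_true_eq, not_le]
    have := sorted_lt_getD_gap hv (show i ≤ i + 1 + j by omega) (by omega)
    omega
  have h3 := List.length_filter_le (fun y => decide (y ≤ v.getD i 0)) (v.take (i+1))
  rw [hsplit, List.length_append, hnil] at h1 ⊢
  rw [List.length_take] at h3
  simp only [List.length_nil] at h1 ⊢
  omega

lemma getD_take' {l : List ℕ} {k i : ℕ} (h : i < k) (h2 : i < l.length) :
    (l.take k).getD i 0 = l.getD i 0 := by
  rw [List.getD_eq_getElem _ _ (by rw [List.length_take]; omega), List.getElem_take,
    List.getD_eq_getElem _ _ h2]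

lemma getD_drop' {l : List ℕ} {k j : ℕ} (h : k + j < l.length) :
    (l.drop k).getD j 0 = l.getD (k + j) 0 := by
  rw [List.getD_eq_getElem _ _ (by rw [List.length_drop]; omega), List.getElem_drop,
    List.getD_eq_getElem _ _ h]

lemma getD_map' {f : ℕ → ℕ} {l : List ℕ} {i : ℕ} (h : i < l.length) :
    (l.map f).getD i 0 = f (l.getD i 0) := by
  rw [List.getD_eq_getElem _ _ (by rw [List.length_map]; omega), List.getElem_map,
    List.getD_eq_getElem _ _ h]

lemma sum_map_sub (l : List ℕ) (c : ℕ) (h : ∀ x ∈ l, c ≤ x) :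
    (l.map (· - c)).sum + c * l.length = l.sum := by
  induction l with
  | nil => simp
  | cons x l ih =>
    have h1 := ih (fun y hy => h y (List.mem_cons_of_mem _ hy))
    have h2 := h x (List.mem_cons_self)
    simp only [List.map_cons, List.sum_cons, List.length_cons, Nat.mul_succ]
    omega

lemma join_inj : ∀ (A B : List (List ℕ)), (∀ a ∈ A, IsIPF a) → (∀ b ∈ B, IsIPF b) →
    A.length = B.length → Join A = Join B → A = B := by
  intro A
  induction A with
  | nil =>
    intro B _ _ hlen _
    cases B with
    | nil => rfl
    | cons b B => simp at hlen
  | cons a A ih =>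
    intro B hA hB hlen hJ
    cases B with
    | nil => simp at hlen
    | cons b B =>
      have key : ∀ (x y : List ℕ) (X Y : List (List ℕ)), IsIPF y → (∀ c ∈ X, IsIPF c) →
          x ++ (Join X).map (· + (x.length + 1)) = y ++ (Join Y).map (· + (y.length + 1)) →
          ¬ x.length < y.length := by
        intro x y X Y hy hX heq hlt
        have hlen1 : x.length < (x ++ (Join X).map (· + (x.length + 1))).length := by
          rw [heq, List.length_append]
          omega
        have hJX : 0 < (Join X).length := by
          rw [List.length_append, List.length_map] at hlen1
          omega
        have hval1 : (x ++ (Join X).map (· + (x.length + 1)))[x.length]'hlen1 =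
            (Join X)[0]'hJX + (x.length + 1) := by
          rw [List.getElem_append_right (le_refl x.length), List.getElem_map]
          simp
        have hge : 1 ≤ (Join X)[0]'hJX :=
          (join_sorted_pos X hX).2 _ (List.getElem_mem hJX)
        have hval2 : (x ++ (Join X).map (· + (x.length + 1)))[x.length]'hlen1 =
            y[x.length]'hlt := by
          have h2 : x.length < (y ++ (Join Y).map (· + (y.length + 1))).length := by
            rw [← heq]; exact hlen1
          have h3 := List.getElem_of_eq heq hlen1
          rw [h3, List.getElem_append_left hlt]
        have hb := ((isIPF_iff y).1 hy).2 x.length hlt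
        rw [List.getD_eq_getElem _ _ hlt] at hb
        omega
      have hAipf : ∀ c ∈ A, IsIPF c := fun c hc => hA c (List.mem_cons_of_mem _ hc)
      have hBipf : ∀ c ∈ B, IsIPF c := fun c hc => hB c (List.mem_cons_of_mem _ hc)
      have haipf : IsIPF a := hA a (List.mem_cons_self)
      have hbipf : IsIPF b := hB b (List.mem_cons_self)
      rw [Join, Join] at hJ
      have hxy : a.length = b.length := by
        rcases lt_trichotomy a.length b.length with h | h | h
        · exact absurd h (key a b A B hbipf hAipf hJ)
        · exact h
        · exact absurd h (key b a B A haipf hBipf hJ.symm)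
      have hab : a = b := by
        have h1 := congrArg (List.take a.length) hJ
        rwa [List.take_left, hxy, List.take_left] at h1
      subst hab
      have h2 : (Join A).map (· + (a.length + 1)) = (Join B).map (· + (a.length + 1)) :=
        List.append_cancel_left hJ
      have h3 : Join A = Join B := by
        have : Function.Injective (· + (a.length + 1)) := fun u v huv => by
          simpa using huv
        exact (List.map_injective_iff.2 this) h2
      rw [ih B hAipf hBipf (by simpa using hlen) h3]

open Classical in
lemma splitMaster : ∀ (fuel : ℕ) (p : List ℕ), p.Pairwise (· ≤ ·) → (∀ x ∈ p, 1 ≤ x) →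
    p.sum < fuel →
    Join (SplitAux fuel p) = p ∧ (∀ b ∈ SplitAux fuel p, IsIPF b) ∧
      ∀ j, j + 1 < (SplitAux fuel p).length →
        (((SplitAux fuel p).take (j + 1)).map List.length).sum + j + 2 ≤
          p.getD ((((SplitAux fuel p).take (j + 1)).map List.length).sum) 0 := by
  intro fuel
  induction fuel with
  | zero => intro p _ _ h; omega
  | succ fuel ih =>
    intro p hs hpos hsum
    by_cases hp : p = []
    · subst hp
      rw [SplitAux]
      simp [Join]
    · have hk_le : Nat.findGreatest (fun k => IsIPF (p.take k)) p.length ≤ p.length :=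
        Nat.findGreatest_le _
      set k := Nat.findGreatest (fun k => IsIPF (p.take k)) p.length with hkdef
      have hIPF : IsIPF (p.take k) := by
        have h0 : IsIPF (p.take 0) := by rw [List.take_zero]; exact isIPF_nil
        have h1 := Nat.findGreatest_spec (P := fun k => IsIPF (p.take k)) (n := p.length)
          (Nat.zero_le _) h0
        rwa [← hkdef] at h1
      by_cases hq : p.drop k = []
      · have hkeq : k = p.length := le_antisymm hk_le (List.drop_eq_nil_iff.1 hq)
        have heq : SplitAux (fuel + 1) p = [p.take k] := by
          rw [SplitAux]
          simp only [if_neg hp, ← hkdef, if_pos hq]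
        rw [heq]
        refine ⟨?_, ?_, ?_⟩
        · show p.take k ++ (Join []).map _ = p
          simp [Join, hkeq]
        · intro b hb
          rw [List.mem_singleton] at hb
          subst hb; exact hIPF
        · intro j hj; simp at hj
      · have hklt : k < p.length := by
          have := mt List.drop_eq_nil_iff.2 hq
          omega
        have hpk : k + 2 ≤ p.getD k 0 := by
          by_contra h2
          push_neg at h2
          have hmem : p.getD k 0 ∈ p := by
            rw [List.getD_eq_getElem _ _ hklt]; exact List.getElem_mem hklt
          have hIPF2 : IsIPF (p.take (k + 1)) := by
            rw [isIPF_iff]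
            refine ⟨hs.sublist (List.take_sublist _ _), fun i hi => ?_⟩
            rw [List.length_take] at hi
            have hi' : i < p.length := by omega
            rw [getD_take' (by omega) hi']
            rcases Nat.lt_or_ge i k with hik | hik
            · have := ((isIPF_iff _).1 hIPF).2 i (by rw [List.length_take]; omega)
              rwa [getD_take' hik hi'] at this
            · have : i = k := by omega
              subst this
              exact ⟨hpos _ hmem, by omega⟩
          exact Nat.findGreatest_is_greatest (n := p.length) (k := k + 1)
            (by rw [← hkdef]; omega) (by omega) hIPF2
        have hqm : ∀ x ∈ p.drop k, k + 2 ≤ x := by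
          intro x hx
          obtain ⟨j, hj, rfl⟩ := mem_drop_getD hx
          exact le_trans hpk (sorted_getD_le hs (by omega) (by omega))
        have hq's : ((p.drop k).map (· - (k + 1))).Pairwise (· ≤ ·) :=
          List.Pairwise.map _ (fun a b hab => Nat.sub_le_sub_right hab _)
            (hs.sublist (List.drop_sublist _ _))
        have hq'pos : ∀ x ∈ (p.drop k).map (· - (k + 1)), 1 ≤ x := by
          rintro x hx
          obtain ⟨y, hy, rfl⟩ := List.mem_map.1 hx
          have := hqm y hy
          omega
        have hq'sum : ((p.drop k).map (· - (k + 1))).sum < fuel := by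
          have h1 := sum_map_sub (p.drop k) (k + 1) (fun x hx => by have := hqm x hx; omega)
          have h2 : (p.drop k).sum ≤ p.sum :=
            List.Sublist.sum_le_sum (List.drop_sublist k p) (by simp)
          have h3 : 0 < (p.drop k).length := List.length_pos_iff.2 hq
          have h4 : 0 < (k + 1) * (p.drop k).length := Nat.mul_pos (by omega) h3
          omega
        obtain ⟨ihJ, ihB, ihC⟩ := ih _ hq's hq'pos hq'sum
        have heq : SplitAux (fuel + 1) p =
            p.take k :: SplitAux fuel ((p.drop k).map (· - (k + 1))) := by
          rw [SplitAux]
          simp only [if_neg hp, ← hkdef, if_neg hq]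
        rw [heq]
        have htklen : (p.take k).length = k := by rw [List.length_take]; omega
        refine ⟨?_, ?_, ?_⟩
        · show p.take k ++ (Join (SplitAux fuel ((p.drop k).map (· - (k + 1))))).map
            (· + ((p.take k).length + 1)) = p
          rw [htklen, ihJ, List.map_map]
          have hdid : (p.drop k).map ((· + (k + 1)) ∘ (· - (k + 1))) = p.drop k := by
            conv_rhs => rw [← List.map_id (p.drop k)]
            refine List.map_congr_left fun x hx => ?_
            have := hqm x hx
            simp only [Function.comp_apply, id_eq]
            omega
          rw [hdid, List.take_append_drop]
        · intro b hb
          rcases List.mem_cons.1 hb with rfl | hb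
          · exact hIPF
          · exact ihB b hb
        · intro j hj
          rcases j with _ | jj
          · simp only [List.take_succ_cons, List.take_zero, List.map_cons, List.map_nil,
              List.sum_cons, List.sum_nil, htklen, Nat.add_zero]
            omega
          · have hj' : jj + 1 < (SplitAux fuel ((p.drop k).map (· - (k + 1)))).length := by
              rw [List.length_cons] at hj
              omega
            have hC := ihC jj hj'
            set L := (((SplitAux fuel ((p.drop k).map (· - (k + 1)))).take (jj + 1)).map
              List.length).sum with hLdef
            have hLlt : L < ((p.drop k).map (· - (k + 1))).length := by
              by_contra hge
              push_neg at hge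
              rw [List.getD_eq_default _ _ hge] at hC
              omega
            rw [List.length_map, List.length_drop] at hLlt
            rw [List.take_succ_cons, List.map_cons, List.sum_cons, htklen, ← hLdef]
            have e1 : p.getD (k + L) 0 = (p.drop k).getD L 0 := (getD_drop' (by omega)).symm
            have e2 : ((p.drop k).map (· - (k + 1))).getD L 0 = (p.drop k).getD L 0 - (k + 1) :=
              getD_map' (by rw [List.length_drop]; omega)
            have e3 : k + 2 ≤ (p.drop k).getD L 0 := by
              refine hqm _ ?_
              rw [List.getD_eq_getElem _ _ (by rw [List.length_drop]; omega)]
              exact List.getElem_mem _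
            rw [e2] at hC
            omega

open Classical in
lemma join_split (p : List ℕ) (hs : p.Pairwise (· ≤ ·)) (hpos : ∀ x ∈ p, 1 ≤ x) :
    Join (Split p) = p :=
  (splitMaster (p.sum + 1) p hs hpos (by omega)).1

/-- Theorem 4.4: for a strictly increasing list `t` of taken spots in `[n]`,
`Join` maps `(n,t)`-compatible lists of increasing parking functions to
increasing parking completions of `t`; `Split` of an increasing parking
completion, padded with empty lists to length `m + 1`, is `(n,t)`-compatible;
and `Join` restricts to a bijection between the two sets. -/
theorem stmt5 (n m : ℕ) (t : List ℕ) (ht_len : t.length = m)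
    (ht_sorted : t.Pairwise (· < ·)) (ht_mem : ∀ x ∈ t, 1 ≤ x ∧ x ≤ n) :
    -- `u`: increasing enumeration of the unoccupied spots `[n] \ t`
    let u : List ℕ := (List.range' 1 n).filter (fun x => decide (x ∉ t))
    -- increasing parking completions of `t` in `[n]`
    let ipc : Set (List ℕ) := {p : List ℕ | p.length = n - m ∧ p.Pairwise (· ≤ ·) ∧
      ∀ i < n - m, 1 ≤ p.getD i 0 ∧ p.getD i 0 ≤ u.getD i 0}
    -- `(n,t)`-compatible lists of increasing parking functions
    let compat : Set (List (List ℕ)) := {A : List (List ℕ) | A.length = m + 1 ∧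
      (∀ a ∈ A, IsIPF a) ∧
      (∀ j < m, t.getD j 0 - (j + 1) ≤ ((A.take (j + 1)).map List.length).sum) ∧
      (A.map List.length).sum = n - m}
    (∀ A ∈ compat, Join A ∈ ipc) ∧
    (∀ p ∈ ipc, (Split p ++ List.replicate (m + 1 - (Split p).length) []) ∈ compat) ∧
    Set.BijOn Join compat ipc := by
  intro u ipc compat
  classical
  have hu : u = (List.range' 1 n).filter (fun x => decide (x ∉ t)) := rfl
  have htnd : t.Nodup := ht_sorted.imp (fun h => ne_of_lt h)
  have husorted : u.Pairwise (· < ·) := by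
    rw [hu]; exact (List.pairwise_lt_range' (s := 1) (n := n)).filter _
  -- partition counting
  have hpart : ∀ X ≤ n, ((List.range' 1 X).filter (fun x => decide (x ∉ t))).length
      + (t.filter (fun y => decide (y ≤ X))).length = X := by
    intro X hX
    have h1 : ((List.range' 1 X).filter (fun x => decide (x ∈ t))).length
        + ((List.range' 1 X).filter (fun x => decide (x ∉ t))).length = X := by
      have h0 := List.length_eq_countP_add_countP (fun x => decide (x ∈ t)) (l := List.range' 1 X)
      rw [List.length_range', List.countP_eq_length_filter, List.countP_eq_length_filter] at h0
      have hcongr : (List.range' 1 X).filter (fun a => decide ¬(decide (a ∈ t) = true))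
          = (List.range' 1 X).filter (fun x => decide (x ∉ t)) :=
        List.filter_congr fun x _ => by simp
      rw [hcongr] at h0
      omega
    have h2 : ((List.range' 1 X).filter (fun x => decide (x ∈ t))).length
        = (t.filter (fun y => decide (y ≤ X))).length := by
      have hnd1 : ((List.range' 1 X).filter (fun x => decide (x ∈ t))).Nodup :=
        ((List.pairwise_lt_range' (s := 1) (n := X)).imp (fun h => ne_of_lt h)).filter _
      have hnd2 : (t.filter (fun y => decide (y ≤ X))).Nodup := htnd.filter _
      have hfs : ((List.range' 1 X).filter (fun x => decide (x ∈ t))).toFinset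
          = (t.filter (fun y => decide (y ≤ X))).toFinset := by
        ext y
        simp only [List.mem_toFinset, List.mem_filter, List.mem_range'_1, decide_eq_true_eq]
        constructor
        · rintro ⟨⟨hy1, hy2⟩, hy3⟩; exact ⟨hy3, by omega⟩
        · rintro ⟨hy1, hy2⟩; exact ⟨⟨(ht_mem y hy1).1, by omega⟩, hy1⟩
      rw [← List.toFinset_card_of_nodup hnd1, ← List.toFinset_card_of_nodup hnd2, hfs]
    omega
  have hulen : u.length = n - m := by
    have h1 := hpart n (le_refl n)
    have h2 : t.filter (fun y => decide (y ≤ n)) = t :=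
      List.filter_eq_self.mpr fun x hx => by simp [(ht_mem x hx).2]
    rw [h2, ht_len, ← hu] at h1
    have h3 : m ≤ n := by
      rcases Nat.eq_zero_or_pos m with hm | hm
      · omega
      · have h4 := (ht_mem (t.getD (m-1) 0) (by
          rw [List.getD_eq_getElem _ _ (by omega)]; exact List.getElem_mem _)).2
        have h5 := sorted_lt_getD_gap ht_sorted (Nat.zero_le (m-1)) (by omega)
        omega
    omega
  have hufilter : ∀ X ≤ n, (u.filter (fun y => decide (y ≤ X))).length
      + (t.filter (fun y => decide (y ≤ X))).length = X := by
    intro X hX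
    have hkey : u.filter (fun y => decide (y ≤ X))
        = (List.range' 1 X).filter (fun x => decide (x ∉ t)) := by
      rw [hu, List.filter_filter]
      have hsplit : List.range' 1 n = List.range' 1 X ++ List.range' (1 + X) (n - X) := by
        have h0 := List.range'_append (s := 1) (m := X) (n := n - X) (step := 1)
        simp only [one_mul] at h0
        rw [show X + (n - X) = n by omega] at h0
        exact h0.symm
      rw [hsplit, List.filter_append]
      have h2 : (List.range' (1 + X) (n - X)).filter
          (fun a => decide (a ≤ X) && decide (a ∉ t)) = [] := by
        rw [List.filter_eq_nil_iff]
        intro x hx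
        rw [List.mem_range'_1] at hx
        simp only [Bool.and_eq_true, decide_eq_true_eq, not_and]
        intro h3
        omega
      have h3 : (List.range' 1 X).filter (fun a => decide (a ≤ X) && decide (a ∉ t))
          = (List.range' 1 X).filter (fun x => decide (x ∉ t)) :=
        List.filter_congr fun x hx => by
          rw [List.mem_range'_1] at hx
          simp only [Bool.and_eq_true, decide_eq_true_eq, Bool.and_eq_right_iff_imp,
            decide_eq_true_eq]
          intro _; omega
      rw [h2, h3, List.append_nil]
    rw [hkey]
    exact hpart X hX
  have humem : ∀ i < n - m, 1 ≤ u.getD i 0 ∧ u.getD i 0 ≤ n := by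
    intro i hi
    have hiu : i < u.length := by omega
    have hm : u.getD i 0 ∈ u := by
      rw [List.getD_eq_getElem _ _ hiu]; exact List.getElem_mem _
    have hm2 : u.getD i 0 ∈ (List.range' 1 n).filter (fun x => decide (x ∉ t)) := hm
    rw [List.mem_filter, List.mem_range'_1] at hm2
    omega
  have htmem' : ∀ j < m, 1 ≤ t.getD j 0 ∧ t.getD j 0 ≤ n := by
    intro j hj
    refine ht_mem _ ?_
    rw [List.getD_eq_getElem _ _ (by omega)]
    exact List.getElem_mem _
  -- forward direction
  have hforward : ∀ A ∈ compat, Join A ∈ ipc := by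
    intro A hA
    obtain ⟨hAlen, hAIPF, hAcond, hAsum⟩ := hA
    have hjlen : (Join A).length = n - m := by rw [join_length, hAsum]
    refine ⟨hjlen, (join_sorted_pos A hAIPF).1, fun i hi => ?_⟩
    have hi' : i < (Join A).length := by omega
    have hmemJ : (Join A).getD i 0 ∈ Join A := by
      rw [List.getD_eq_getElem _ _ hi']; exact List.getElem_mem _
    refine ⟨(join_sorted_pos A hAIPF).2 _ hmemJ, ?_⟩
    obtain ⟨r, hr, hLr, hub⟩ := join_upper A hAIPF i hi'
    have hiu : i < u.length := by omega
    have hun := humem i hi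
    have hcnt := sorted_lt_count_eq husorted hiu
    have hpr := hufilter (u.getD i 0) hun.2
    by_cases hcr : i + r + 1 ≤ u.getD i 0
    · omega
    · exfalso
      push_neg at hcr
      set c := (t.filter (fun y => decide (y ≤ u.getD i 0))).length with hcdef
      have hc_lt : c < m := by omega
      have htc : ¬ t.getD c 0 ≤ u.getD i 0 := by
        intro hle
        have := (sorted_le_count (ht_sorted.imp le_of_lt)
          (show c < t.length by omega) (u.getD i 0)).1 hle
        omega
      push_neg at htc
      have hcond := hAcond c hc_lt
      have hmono := lsum_mono A (show c + 1 ≤ r by omega)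
      omega
  -- backward direction
  have hbackward : ∀ p ∈ ipc,
      (Split p ++ List.replicate (m + 1 - (Split p).length) []) ∈ compat := by
    intro p hp
    obtain ⟨hplen, hpsorted, hpbound⟩ := hp
    have hppos : ∀ x ∈ p, 1 ≤ x := by
      intro x hx
      obtain ⟨i, hi, rfl⟩ := List.getElem_of_mem hx
      rw [← List.getD_eq_getElem _ 0 hi]
      exact (hpbound i (by omega)).1
    obtain ⟨hJ, hB, hC⟩ := splitMaster (p.sum + 1) p hpsorted hppos (by omega)
    have hSdef : Split p = SplitAux (p.sum + 1) p := rfl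
    rw [← hSdef] at hJ hB hC
    -- cut fact consequences
    have hcut : ∀ j, j + 1 < (Split p).length →
        t.getD j 0 ≤ (((Split p).take (j + 1)).map List.length).sum + j + 1 ∧ j < m := by
      intro j hj
      have hC' := hC j hj
      set L := (((Split p).take (j + 1)).map List.length).sum with hLdef
      have hLlt : L < p.length := by
        by_contra hge
        push_neg at hge
        rw [List.getD_eq_default _ _ hge] at hC'
        omega
      have hub := hpbound L (by omega)
      have hiu : L < u.length := by omega
      have hcnt := sorted_lt_count_eq husorted hiu
      have humax := humem L (by omega)
      have hpr := hufilter (u.getD L 0) humax.2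
      have hcle : (t.filter (fun y => decide (y ≤ u.getD L 0))).length ≤ t.length :=
        List.length_filter_le _ _
      have hjm : j < m := by omega
      refine ⟨?_, hjm⟩
      by_cases hXn : L + j + 1 ≤ n
      · -- count elements below X
        have h5 : (u.filter (fun y => decide (y ≤ L + j + 1))).length ≤ L := by
          by_contra h6
          push_neg at h6
          have h7 := (sorted_le_count (husorted.imp le_of_lt) hiu (L + j + 1)).2 (by omega)
          omega
        have hpr2 := hufilter (L + j + 1) hXn
        have h8 := (sorted_le_count (ht_sorted.imp le_of_lt)
          (show j < t.length by omega) (L + j + 1)).2 (by omega)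
        omega
      · have := (htmem' j hjm).2
        omega
    -- length bound
    have hslen : (Split p).length ≤ m + 1 := by
      by_contra hgt
      push_neg at hgt
      have := (hcut m hgt).2
      omega
    refine ⟨?_, ?_, ?_, ?_⟩
    · rw [List.length_append, List.length_replicate]
      omega
    · intro a ha
      rcases List.mem_append.1 ha with ha | ha
      · exact hB a ha
      · rw [List.mem_replicate] at ha
        rw [ha.2]
        exact isIPF_nil
    · intro j hj
      rw [List.take_append, List.map_append, List.sum_append,
        List.take_replicate, List.map_replicate, List.length_nil, List.sum_replicate, smul_zero]
      by_cases hcase : j + 1 < (Split p).length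
      · have := (hcut j hcase).1
        omega
      · -- take (j+1) covers all of Split p
        push_neg at hcase
        rw [List.take_of_length_le hcase]
        have hsum : ((Split p).map List.length).sum = n - m := by
          rw [← join_length, hJ, hplen]
        have hgap := sorted_lt_getD_gap ht_sorted (show j ≤ m - 1 by omega)
          (show m - 1 < t.length by omega)
        have h9 := (htmem' (m-1) (by omega)).2
        omega
    · rw [List.map_append, List.sum_append, List.map_replicate, List.length_nil, List.sum_replicate, smul_zero,
        ← join_length, hJ, hplen]
      omega
  have hJS : ∀ p ∈ ipc, Join (Split p ++ List.replicate (m + 1 - (Split p).length) []) = p := by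
    intro p hp
    obtain ⟨hplen, hpsorted, hpbound⟩ := hp
    have hppos : ∀ x ∈ p, 1 ≤ x := by
      intro x hx
      obtain ⟨i, hi, rfl⟩ := List.getElem_of_mem hx
      rw [← List.getD_eq_getElem _ 0 hi]
      exact (hpbound i (by omega)).1
    rw [join_append_replicate]
    exact join_split p hpsorted hppos
  refine ⟨hforward, hbackward, hforward, ?_, ?_⟩
  · intro A hA B hB hAB
    exact join_inj A B hA.2.1 hB.2.1 (hA.1.trans hB.1.symm) hAB
  · intro p hp
    exact ⟨_, hbackward p hp, hJS p hp⟩
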